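/- (Bessel's inequality, Halász–Bombieri form.) Let E be a complex inner product space, let R ≥ 1 be an integer, and let v, Φ₁, …, Φ_R ∈ E. Then ∑_{r=1}^{R} |⟨v, Φ_r⟩|² ≤ ‖v‖² · max_{1 ≤ r ≤ R} ∑_{s=1}^{R} |⟨Φ_r, Φ_s⟩|. -/

import Mathlib

/-- (Bessel's inequality, Halász–Bombieri form.) -/
theorem statement6
    (E : Type*) [NormedAddCommGroup E] [InnerProductSpace ℂ E]
    (R : ℕ) (hR : 1 ≤ R) (v : E) (Φ : Fin R → E) :
    ∑ r : Fin R, ‖(inner ℂ v (Φ r) : ℂ)‖ ^ 2 ≤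
      ‖v‖ ^ 2 * ⨆ r : Fin R, ∑ s : Fin R, ‖(inner ℂ (Φ r) (Φ s) : ℂ)‖ := by
  haveI : Nonempty (Fin R) := ⟨⟨0, hR⟩⟩
  set a : Fin R → ℂ := fun r => inner ℂ v (Φ r) with ha
  set b : Fin R → Fin R → ℝ := fun r s => ‖(inner ℂ (Φ r) (Φ s) : ℂ)‖ with hb
  set M : ℝ := ⨆ r : Fin R, ∑ s : Fin R, b r s with hM
  set Sig : ℝ := ∑ r : Fin R, ‖a r‖ ^ 2 with hSig
  have hbdd : BddAbove (Set.range fun r : Fin R => ∑ s : Fin R, b r s) :=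
    Set.Finite.bddAbove (Set.finite_range _)
  have hsum_le_M : ∀ r : Fin R, ∑ s : Fin R, b r s ≤ M := fun r => le_ciSup hbdd r
  have hM0 : 0 ≤ M := le_trans (Finset.sum_nonneg fun s _ => norm_nonneg _)
    (hsum_le_M (Classical.arbitrary _))
  have hSig0 : 0 ≤ Sig := Finset.sum_nonneg fun r _ => by positivity
  set S : E := ∑ r : Fin R, (starRingEnd ℂ (a r)) • Φ r with hS
  have hvS : (inner ℂ v S : ℂ) = (Sig : ℂ) := by
    rw [hS, inner_sum]
    push_cast [hSig]
    refine Finset.sum_congr rfl fun r _ => ?_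
    rw [inner_smul_right]
    rw [show (inner ℂ v (Φ r) : ℂ) = a r from rfl]
    rw [mul_comm, Complex.mul_conj']
  -- Step A : Sig ≤ ‖v‖ * ‖S‖
  have stepA : Sig ≤ ‖v‖ * ‖S‖ := by
    have := norm_inner_le_norm (𝕜 := ℂ) v S
    rw [hvS] at this
    simpa [abs_of_nonneg hSig0] using this
  -- Step B : ‖S‖ ^ 2 ≤ Sig * M
  have stepB : ‖S‖ ^ 2 ≤ Sig * M := by
    have h1 : (‖S‖ : ℝ) ^ 2 ≤ ‖(inner ℂ S S : ℂ)‖ := by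
      rw [@inner_self_eq_norm_sq_to_K ℂ]
      push_cast
      simp
    have h2 : ‖(inner ℂ S S : ℂ)‖ ≤ ∑ r : Fin R, ∑ s : Fin R, ‖a r‖ * ‖a s‖ * b r s := by
      rw [hS, inner_sum]
      refine le_trans (norm_sum_le _ _) (Finset.sum_le_sum fun s _ => ?_)
      rw [inner_smul_right, sum_inner]
      rw [norm_mul]
      refine le_trans (mul_le_mul_of_nonneg_left (norm_sum_le _ _) (norm_nonneg _)) ?_
      rw [Finset.mul_sum]
      refine Finset.sum_le_sum fun r _ => ?_
      rw [inner_smul_left, Complex.conj_conj]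
      simp only [norm_mul, RCLike.norm_conj, hb]
      rw [norm_inner_symm (Φ r) (Φ s)]
      apply le_of_eq
      ring
    have h3 : ∑ r : Fin R, ∑ s : Fin R, ‖a r‖ * ‖a s‖ * b r s ≤
        ∑ r : Fin R, ∑ s : Fin R, ((‖a r‖ ^ 2 + ‖a s‖ ^ 2) / 2) * b r s := by
      refine Finset.sum_le_sum fun r _ => Finset.sum_le_sum fun s _ => ?_
      refine mul_le_mul_of_nonneg_right ?_ (norm_nonneg _)
      nlinarith [sq_nonneg (‖a r‖ - ‖a s‖)]
    have hbsymm : ∀ r s, b r s = b s r := fun r s =>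
      norm_inner_symm (Φ r) (Φ s)
    have h4 : ∑ r : Fin R, ∑ s : Fin R, ((‖a r‖ ^ 2 + ‖a s‖ ^ 2) / 2) * b r s =
        ∑ r : Fin R, ∑ s : Fin R, ‖a r‖ ^ 2 * b r s := by
      have hsplit : ∀ r s : Fin R, ((‖a r‖ ^ 2 + ‖a s‖ ^ 2) / 2) * b r s =
          (‖a r‖ ^ 2 * b r s) / 2 + (‖a s‖ ^ 2 * b r s) / 2 := fun r s => by ring
      simp_rw [hsplit, Finset.sum_add_distrib]
      have : ∑ r : Fin R, ∑ s : Fin R, ‖a s‖ ^ 2 * b r s / 2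
          = ∑ r : Fin R, ∑ s : Fin R, ‖a r‖ ^ 2 * b r s / 2 := by
        rw [Finset.sum_comm]
        refine Finset.sum_congr rfl fun r _ => Finset.sum_congr rfl fun s _ => ?_
        rw [hbsymm r s]
      rw [this, ← Finset.sum_add_distrib]
      refine Finset.sum_congr rfl fun r _ => ?_
      rw [← Finset.sum_add_distrib]
      refine Finset.sum_congr rfl fun s _ => by ring
    have h5 : ∑ r : Fin R, ∑ s : Fin R, ‖a r‖ ^ 2 * b r s ≤ Sig * M := by
      rw [hSig, Finset.sum_mul]
      refine Finset.sum_le_sum fun r _ => ?_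
      rw [← Finset.mul_sum]
      exact mul_le_mul_of_nonneg_left (hsum_le_M r) (by positivity)
    linarith
  -- Combine
  have key : Sig ^ 2 ≤ ‖v‖ ^ 2 * (Sig * M) := by
    calc Sig ^ 2 ≤ (‖v‖ * ‖S‖) ^ 2 := by
          exact pow_le_pow_left₀ hSig0 stepA 2
      _ = ‖v‖ ^ 2 * ‖S‖ ^ 2 := by ring
      _ ≤ ‖v‖ ^ 2 * (Sig * M) := mul_le_mul_of_nonneg_left stepB (by positivity)
  rcases eq_or_lt_of_le hSig0 with h | h
  · rw [← h]; positivity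
  · have : Sig * Sig ≤ (‖v‖ ^ 2 * M) * Sig := by nlinarith
    exact le_of_mul_le_mul_right this h
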